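/- Let σ be a weakly consecutive permutation of [k], let p be prime and c ≥ 1 an integer with p^c ≤ k < p^c + p^(c-1). Then the permutation obtained from σ by swapping the positions of the values p^c and p^(c-1) (i.e., π(i) = p^c if σ(i) = p^(c-1), π(i) = p^(c-1) if σ(i) = p^c, and π(i) = σ(i) otherwise) is weakly consecutive. -/

import Mathlib

/-- A permutation `σ` of `[k] = {1,…,k}` is weakly consecutive if for all
`i, j ∈ [k]` and integers `m`, whenever `m ∣ σ i` and `m ∣ (i - j)`, then `m ∣ σ j`. -/
def IsWCS (k : ℕ) (σ : ℕ → ℕ) : Prop :=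
  Set.BijOn σ (Set.Icc 1 k) (Set.Icc 1 k) ∧
  ∀ (m : ℕ) (i j : ℕ), i ∈ Set.Icc 1 k → j ∈ Set.Icc 1 k →
    m ∣ σ i → (m : ℤ) ∣ ((i : ℤ) - (j : ℤ)) → m ∣ σ j

theorem prime_power_swap_is_wcs (k : ℕ) (σ : ℕ → ℕ) (hσ : IsWCS k σ)
    (p c : ℕ) (hp : p.Prime) (hc : 1 ≤ c)
    (hlow : p ^ c ≤ k) (hhigh : k < p ^ c + p ^ (c - 1)) :
    IsWCS k (fun i =>
      if σ i = p ^ (c - 1) then p ^ c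
      else if σ i = p ^ c then p ^ (c - 1) else σ i) := by
  obtain ⟨hbij, hdiv⟩ := hσ
  set q := p ^ (c - 1) with hqdef
  set P := p ^ c with hPdef
  have hPq : P = p * q := by
    rw [hPdef, hqdef, ← pow_succ']
    congr 1
    omega
  have hp2 : 2 ≤ p := hp.two_le
  have hq1 : 1 ≤ q := Nat.one_le_pow _ _ hp.pos
  have hqP : q < P := by nlinarith
  have hP1 : 1 ≤ P := le_trans hq1 hqP.le
  have hqdvdP : q ∣ P := ⟨p, by rw [hPq]; ring⟩
  have hk1 : 1 ≤ k := le_trans hP1 hlow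
  have lemD : ∀ m, m ∣ P → m ∣ q ∨ m = P := by
    intro m hm
    rw [hPdef] at hm
    obtain ⟨t, htc, rfl⟩ := (Nat.dvd_prime_pow hp).mp hm
    rcases eq_or_lt_of_le htc with h | h
    · right; rw [h, hPdef]
    · left; rw [hqdef]; exact pow_dvd_pow p (by omega)
  clear_value q P
  clear hqdef hPdef
  have hkpq : k < (p + 1) * q := by nlinarith
  -- any element of [1,k] divisible by P equals P
  have lemA : ∀ x, x ∈ Set.Icc 1 k → P ∣ x → x = P := by
    intro x hx hdx
    obtain ⟨t, ht⟩ := hdx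
    simp only [Set.mem_Icc] at hx
    have ht1 : t = 1 := by
      rcases Nat.lt_or_ge t 2 with h | h
      · interval_cases t
        · omega
        · rfl
      · exfalso
        have : P * 2 ≤ P * t := Nat.mul_le_mul_left P h
        omega
    rw [ht1, mul_one] at ht
    exact ht
  -- key lemma
  have lemB : ∀ i ∈ Set.Icc 1 k, ∀ j ∈ Set.Icc 1 k, q ∣ σ i →
      (P : ℤ) ∣ (i : ℤ) - (j : ℤ) → i = j := by
    intro i hi j hj hqi hPij
    by_contra hne
    set a := min i j with ha
    set b := max i j with hb
    simp only [Set.mem_Icc] at hi hj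
    have ha1 : 1 ≤ a := by simp [ha]; omega
    have hbk : b ≤ k := by simp [hb]; omega
    have hdvdba : P ∣ b - a := by
      rcases le_total i j with h | h
      · have h1 : (P : ℤ) ∣ ((j : ℤ) - i) := by
          have := dvd_neg.mpr hPij
          rwa [neg_sub] at this
        have h2 : ((b - a : ℕ) : ℤ) = (j : ℤ) - i := by
          simp [ha, hb, min_eq_left h, max_eq_right h]
          omega
        exact_mod_cast h2 ▸ h1
      · have h2 : ((b - a : ℕ) : ℤ) = (i : ℤ) - j := by
          simp [ha, hb, min_eq_right h, max_eq_left h]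
          omega
        exact_mod_cast h2 ▸ hPij
    have hba : b - a = P := by
      obtain ⟨t, ht⟩ := hdvdba
      have hab : a < b := by
        rcases lt_or_ge i j with h | h
        · simp [ha, hb, min_eq_left h.le, max_eq_right h.le]; omega
        · have : j < i := lt_of_le_of_ne h (fun hh => hne hh.symm)
          simp [ha, hb, min_eq_right h, max_eq_left h]; omega
      have hblt : b - a < 2 * P := by omega
      have ht1 : t = 1 := by
        rcases Nat.lt_or_ge t 2 with h | h
        · interval_cases t
          · omega
          · rfl
        · exfalso
          have : P * 2 ≤ P * t := Nat.mul_le_mul_left P h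
          omega
      rw [ht1, mul_one] at ht
      exact ht
    have hia : q ∣ i - a ∧ a ≤ i := by
      constructor
      · rcases le_total i j with h | h
        · have : a = i := min_eq_left h
          simp [this]
        · have h1 : a = j := min_eq_right h
          have h2 : b = i := max_eq_left h
          have : i - a = P := by omega
          rw [this]; exact hqdvdP
      · exact min_le_left _ _
    -- each position a + s*q for s ≤ p has σ-value divisible by q
    have key : ∀ s, s ≤ p → (a + s * q) ∈ Set.Icc 1 k ∧ q ∣ σ (a + s * q) := by
      intro s hs
      have hmem : (a + s * q) ∈ Set.Icc 1 k := by
        simp only [Set.mem_Icc]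
        constructor
        · omega
        · have : s * q ≤ p * q := Nat.mul_le_mul_right q hs
          have : a + s * q ≤ a + P := by omega
          omega
      refine ⟨hmem, ?_⟩
      apply hdiv q i (a + s * q) (by simp only [Set.mem_Icc]; omega) hmem hqi
      obtain ⟨u, hu⟩ := hia.1
      have hieq : i = a + q * u := by
        have := hia.2
        omega
      have heq : (i : ℤ) - ((a + s * q : ℕ) : ℤ) = (q : ℤ) * u - (q : ℤ) * s := by
        push_cast [hieq]
        ring
      rw [heq]
      exact dvd_sub (dvd_mul_right _ _) (dvd_mul_right _ _)
    -- counting contradiction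
    have hinj := hbij.2.1
    have hcard : (Finset.range (p + 1)).card ≤ (Finset.Icc 1 p).card := by
      apply Finset.card_le_card_of_injOn (fun s => σ (a + s * q) / q)
      · intro s hs
        simp only [Finset.mem_coe, Finset.mem_range] at hs
        obtain ⟨hmem, hdvd⟩ := key s (by omega)
        obtain ⟨t, ht⟩ := hdvd
        have hσb : 1 ≤ σ (a + s * q) ∧ σ (a + s * q) ≤ k := by
          have := hbij.1 hmem
          simpa [Set.mem_Icc] using this
        have h1 : 1 ≤ t := by nlinarith [hσb.1]
        have h2 : t ≤ p := by nlinarith [hσb.2]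
        simp only [Finset.mem_coe, Finset.mem_Icc]
        rw [ht, Nat.mul_div_cancel_left t (by omega : 0 < q)]
        exact ⟨h1, h2⟩
      · intro s hs s' hs' hss
        replace hs := Finset.mem_range.mp hs
        replace hs' := Finset.mem_range.mp hs'
        obtain ⟨hmem, hdvd⟩ := key s (by omega)
        obtain ⟨hmem', hdvd'⟩ := key s' (by omega)
        have hval : σ (a + s * q) = σ (a + s' * q) := by
          have e1 := Nat.div_mul_cancel hdvd
          have e2 := Nat.div_mul_cancel hdvd'
          have hss' : σ (a + s * q) / q = σ (a + s' * q) / q := hss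
          calc σ (a + s * q) = σ (a + s * q) / q * q := e1.symm
            _ = σ (a + s' * q) / q * q := by rw [hss']
            _ = σ (a + s' * q) := e2
        have heq := hinj hmem hmem' hval
        have h3 : s * q = s' * q := Nat.add_left_cancel heq
        exact Nat.eq_of_mul_eq_mul_right (by omega) h3
    simp only [Finset.card_range, Nat.card_Icc] at hcard
    omega
  constructor
  · -- bijectivity
    have hqmem : q ∈ Set.Icc 1 k := by simp only [Set.mem_Icc]; omega
    have hPmem : P ∈ Set.Icc 1 k := by simp only [Set.mem_Icc]; omega
    have hswap : Set.BijOn (fun x => if x = q then P else if x = P then q else x)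
        (Set.Icc 1 k) (Set.Icc 1 k) := by
      refine ⟨?_, ?_, ?_⟩
      · intro x hx
        dsimp only
        split_ifs
        exacts [hPmem, hqmem, hx]
      · intro x hx y hy hxy
        dsimp only at hxy
        split_ifs at hxy <;> omega
      · intro y hy
        by_cases h1 : y = P
        · exact ⟨q, hqmem, by dsimp only; split_ifs <;> omega⟩
        by_cases h2 : y = q
        · exact ⟨P, hPmem, by dsimp only; split_ifs <;> omega⟩
        · exact ⟨y, hy, by dsimp only; split_ifs <;> omega⟩
    exact hswap.comp hbij
  · -- divisibility
    intro m i j hi hj hm1 hm2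
    simp only at hm1 ⊢
    by_cases hmi : m ∣ σ i
    · have hmj : m ∣ σ j := hdiv m i j hi hj hmi hm2
      by_cases h1 : σ j = q
      · rw [if_pos h1]
        exact dvd_trans (h1 ▸ hmj) hqdvdP
      by_cases h2 : σ j = P
      · rw [if_neg h1, if_pos h2]
        rcases lemD m (h2 ▸ hmj) with h | hmP
        · exact h
        · have hσi : σ i = P := lemA _ (hbij.1 hi) (hmP ▸ hmi)
          rw [if_neg (by omega : ¬ σ i = q), if_pos hσi] at hm1
          have := Nat.le_of_dvd hq1 hm1
          omega
      · rw [if_neg h1, if_neg h2]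
        exact hmj
    · by_cases h1 : σ i = q
      · rw [if_pos h1] at hm1
        rcases lemD m hm1 with h | hmP
        · exact absurd (h1 ▸ h) hmi
        · have hij : i = j := lemB i hi j hj (h1 ▸ dvd_refl q) (by rw [hmP] at hm2; exact hm2)
          subst hij
          rw [if_pos h1, hmP]
      · have h2 : σ i = P := by
          by_contra h2
          rw [if_neg h1, if_neg h2] at hm1
          exact hmi hm1
        rw [if_neg h1, if_pos h2] at hm1
        exact absurd (hm1.trans (h2 ▸ hqdvdP)) hmi
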